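/- Let d ≥ 1 be an integer, let x be a random vector in ℝ^d whose d coordinates are independent Gaussians N(0, 1/d), and let δ ∈ (0, 1). Then the probability that the Euclidean norm ‖x‖₂ lies in the open interval (1 - δ, 1 + δ) is at least 1 − 2·exp(−δ²d/10). -/

import Mathlib

open MeasureTheory ProbabilityTheory
open Real
open scoped ENNReal NNReal

section Aux

lemma aux_b_pos {v : NNReal} (hv : v ≠ 0) {t : ℝ} (ht : 2 * t * v < 1) :
    0 < (2 * (v:ℝ))⁻¹ - t := by
  have hv0 : (0:ℝ) < v := by positivity
  have h2v : (0:ℝ) < 2 * v := by positivity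
  rw [sub_pos, ← one_div, lt_div_iff₀ h2v]
  linarith

lemma aux_pdf_eq {v : NNReal} (t : ℝ) :
    (fun x => ((gaussianPDFReal 0 v x).toNNReal : ℝ) * Real.exp (t * x ^ 2)) =
      fun x => (√(2 * π * v))⁻¹ * Real.exp (-((2 * (v:ℝ))⁻¹ - t) * x ^ 2) := by
  funext x
  rw [Real.coe_toNNReal _ (gaussianPDFReal_nonneg 0 v x), gaussianPDFReal]
  rw [mul_assoc, ← Real.exp_add]
  ring_nf

lemma integrable_exp_mul_sq_gaussian {v : NNReal} (hv : v ≠ 0) {t : ℝ} (ht : 2 * t * v < 1) :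
    Integrable (fun y => Real.exp (t * y ^ 2)) (gaussianReal 0 v) := by
  have hb := aux_b_pos hv ht
  rw [gaussianReal_of_var_ne_zero 0 hv, gaussianPDF_def]
  have hmeas : Measurable fun x => (gaussianPDFReal 0 v x).toNNReal :=
    (measurable_gaussianPDFReal 0 v).real_toNNReal
  have hrw : (fun x => ENNReal.ofReal (gaussianPDFReal 0 v x)) =
      fun x => ((gaussianPDFReal 0 v x).toNNReal : ℝ≥0∞) := rfl
  rw [hrw, integrable_withDensity_iff_integrable_smul hmeas]
  simp_rw [NNReal.smul_def, smul_eq_mul]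
  rw [aux_pdf_eq]
  exact (integrable_exp_neg_mul_sq hb).const_mul _

lemma integral_exp_mul_sq_gaussian {v : NNReal} (hv : v ≠ 0) {t : ℝ} (ht : 2 * t * v < 1) :
    ∫ y, Real.exp (t * y ^ 2) ∂(gaussianReal 0 v) = (√(1 - 2 * t * v))⁻¹ := by
  have hv0 : (0:ℝ) < v := by positivity
  have hb := aux_b_pos hv ht
  set b : ℝ := (2 * (v:ℝ))⁻¹ - t with hbdef
  rw [gaussianReal_of_var_ne_zero 0 hv, gaussianPDF_def]
  have hmeas : Measurable fun x => (gaussianPDFReal 0 v x).toNNReal :=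
    (measurable_gaussianPDFReal 0 v).real_toNNReal
  have hrw : (fun x => ENNReal.ofReal (gaussianPDFReal 0 v x)) =
      fun x => ((gaussianPDFReal 0 v x).toNNReal : ℝ≥0∞) := rfl
  rw [hrw, integral_withDensity_eq_integral_smul hmeas]
  simp_rw [NNReal.smul_def, smul_eq_mul]
  rw [aux_pdf_eq, integral_const_mul, integral_gaussian]
  have h2pv : (0:ℝ) < 2 * π * v := by positivity
  have h1 : (1:ℝ) - 2 * t * v = (2 * v) * b := by
    rw [hbdef]; field_simp
  have hπb : π / b = (2 * π * v) / (1 - 2 * t * v) := by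
    rw [h1]; field_simp
  have h1tv : (0:ℝ) < 1 - 2 * t * v := by rw [h1]; positivity
  rw [hπb, Real.sqrt_div h2pv.le]
  have ha : √(2 * π * (v:ℝ)) ≠ 0 := by positivity
  field_simp

lemma pi_eval_preimage {d : ℕ} (μ : Fin d → Measure ℝ) [∀ i, IsProbabilityMeasure (μ i)]
    (i : Fin d) (s : Set ℝ) :
    Measure.pi μ ((fun x => x i) ⁻¹' s) = μ i s := by
  classical
  have : (fun x : Fin d → ℝ => x i) ⁻¹' s =
      Set.pi Set.univ (Function.update (fun _ => Set.univ) i s) := Set.eval_preimage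
  rw [this, Measure.pi_pi, Finset.prod_eq_single i]
  · rw [Function.update_self]
  · intro j _ hj
    rw [Function.update_of_ne hj]
    simp
  · simp

lemma iIndepFun_eval {d : ℕ} (μ : Fin d → Measure ℝ) [∀ i, IsProbabilityMeasure (μ i)] :
    iIndepFun (fun (i : Fin d) (x : Fin d → ℝ) => x i)
      (Measure.pi μ) := by
  classical
  rw [iIndepFun_iff_measure_inter_preimage_eq_mul]
  intro S sets hsets
  have h1 : (⋂ i ∈ S, (fun x : Fin d → ℝ => x i) ⁻¹' sets i) =
      Set.pi Set.univ (fun i => if i ∈ S then sets i else Set.univ) := by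
    ext x
    simp only [Set.mem_iInter, Set.mem_preimage, Set.mem_pi, Set.mem_univ, true_imp_iff]
    constructor
    · intro h i
      split_ifs with hi
      · exact h i hi
      · trivial
    · intro h i hi
      have := h i
      rwa [if_pos hi] at this
  rw [h1, Measure.pi_pi]
  have h2 : ∀ i : Fin d, μ i (if i ∈ S then sets i else Set.univ) =
      if i ∈ S then μ i (sets i) else 1 := by
    intro i; split_ifs <;> simp
  simp_rw [h2]
  rw [Finset.prod_ite_mem Finset.univ S fun i => μ i (sets i)]
  rw [Finset.univ_inter]
  exact Finset.prod_congr rfl fun i hi => (pi_eval_preimage μ i (sets i)).symm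

lemma base_upper {δ : ℝ} (hδ0 : 0 < δ) (hδ1 : δ < 1) :
    (√(1 - δ/2))⁻¹ ≤ Real.exp (δ/4 * (1+δ)^2 - δ^2/10) := by
  set c : ℝ := δ/4 * (1+δ)^2 - δ^2/10 with hc
  have hint1 : (0:ℝ) ≤ δ^2 * (1-δ) * (1+δ) := by
    have : (0:ℝ) ≤ 1 - δ := by linarith
    positivity
  have hint2 : (0:ℝ) < δ^3 := by positivity
  have hc0 : 0 < c := by rw [hc]; nlinarith
  have hx : (0:ℝ) < 1 - δ/2 := by linarith
  have h1 : 2*c + 1 ≤ Real.exp (2*c) := Real.add_one_le_exp _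
  have h6 : (0:ℝ) < 2*c + 1 := by linarith
  have h3 : Real.exp (-(2*c)) * (2*c+1) ≤ 1 := by
    rw [Real.exp_neg, inv_mul_le_iff₀ (Real.exp_pos _), mul_one]
    exact h1
  have hprod : 1 ≤ (1 - δ/2) * (2*c+1) := by rw [hc]; nlinarith
  have key : Real.exp (-(2*c)) ≤ 1 - δ/2 := by
    have ha : Real.exp (-(2*c)) ≤ 1 / (2*c+1) := (le_div_iff₀ h6).mpr h3
    have hb : 1 / (2*c+1) ≤ 1 - δ/2 := (div_le_iff₀ h6).mpr (by linarith)
    linarith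
  have h4 : Real.exp (-c) ≤ √(1 - δ/2) := by
    rw [Real.le_sqrt (Real.exp_pos _).le hx.le, sq, ← Real.exp_add]
    convert key using 2; ring
  have h5 : (√(1 - δ/2))⁻¹ ≤ (Real.exp (-c))⁻¹ :=
    inv_anti₀ (Real.exp_pos _) h4
  rwa [Real.exp_neg, inv_inv] at h5

lemma base_lower {δ : ℝ} (hδ0 : 0 < δ) (hδ1 : δ < 1) :
    (√(1 + δ/2))⁻¹ ≤ Real.exp (-(δ/4 * (1-δ)^2) - δ^2/10) := by
  set c : ℝ := δ/4 * (1-δ)^2 + δ^2/10 with hc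
  have hint1 : (0:ℝ) ≤ δ^2 * (1-δ) * (1+δ) := by
    have : (0:ℝ) ≤ 1 - δ := by linarith
    positivity
  have hint2 : (0:ℝ) ≤ δ^2 * (1-δ) := by
    have : (0:ℝ) ≤ 1 - δ := by linarith
    positivity
  have hint3 : (0:ℝ) < δ^3 := by positivity
  have hδ3 : δ^3 < 1 := by nlinarith
  have hc0 : 0 < c := by rw [hc]; positivity
  have hz : 2*c < 1 := by rw [hc]; nlinarith
  have hzpos : 0 < 1 - 2*c := by linarith
  have h1 : 1 - 2*c ≤ Real.exp (-(2*c)) := by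
    have := Real.add_one_le_exp (-(2*c)); linarith
  have h3 : Real.exp (2*c) * (1 - 2*c) ≤ 1 := by
    have := mul_le_mul_of_nonneg_left h1 (Real.exp_pos (2*c)).le
    rwa [← Real.exp_add, add_neg_cancel, Real.exp_zero] at this
  have hprod : 1 ≤ (1 - 2*c) * (1 + δ/2) := by rw [hc]; nlinarith
  have key : Real.exp (2*c) ≤ 1 + δ/2 := by
    have ha : Real.exp (2*c) ≤ 1 / (1-2*c) := (le_div_iff₀ hzpos).mpr h3
    have hb : 1 / (1-2*c) ≤ 1 + δ/2 := (div_le_iff₀ hzpos).mpr (by linarith)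
    linarith
  have h4 : Real.exp c ≤ √(1 + δ/2) := by
    rw [Real.le_sqrt (Real.exp_pos _).le (by linarith), sq, ← Real.exp_add]
    convert key using 2; ring
  have h5 : (√(1 + δ/2))⁻¹ ≤ (Real.exp c)⁻¹ :=
    inv_anti₀ (Real.exp_pos _) h4
  rwa [← Real.exp_neg, show -c = -(δ/4 * (1-δ)^2) - δ^2/10 by rw [hc]; ring] at h5

end Aux

/-- Law of a random vector in `ℝ^d` with i.i.d. `N(0, 1/d)` coordinates. -/
noncomputable def gaussianVec (d : ℕ) : Measure (Fin d → ℝ) :=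
  Measure.pi fun _ => gaussianReal 0 (d : NNReal)⁻¹

/-- If `x ∈ ℝ^d` has i.i.d. `N(0, 1/d)` coordinates (`d ≥ 1`) and
`δ ∈ (0,1)`, then `P[‖x‖₂ ∈ (1 - δ, 1 + δ)] ≥ 1 - 2 exp(-δ² d / 10)`. -/
theorem stmt_6 (d : ℕ) (hd : 1 ≤ d) (δ : ℝ) (hδ0 : 0 < δ) (hδ1 : δ < 1) :
    1 - 2 * Real.exp (-δ ^ 2 * d / 10) ≤
      (gaussianVec d
        {x | Real.sqrt (∑ i, x i ^ 2) ∈ Set.Ioo (1 - δ) (1 + δ)}).toReal := by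
  classical
  set v : NNReal := (d : NNReal)⁻¹ with hvdef
  have hd0 : (0:ℝ) < d := by exact_mod_cast hd
  have hv : v ≠ 0 := by
    rw [hvdef]
    exact inv_ne_zero (Nat.cast_ne_zero.mpr (by omega))
  have hvr : (v:ℝ) = (d:ℝ)⁻¹ := by
    rw [hvdef]; push_cast; rfl
  set μ : Measure (Fin d → ℝ) := gaussianVec d with hμdef
  haveI : IsProbabilityMeasure μ := by
    rw [hμdef, gaussianVec]; infer_instance
  set X : Fin d → (Fin d → ℝ) → ℝ := fun i x => x i ^ 2 with hXdef
  have hXmeas : ∀ i, Measurable (X i) := fun i => (measurable_pi_apply i).pow_const 2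
  have hindep : iIndepFun X μ := by
    have := (iIndepFun_eval (fun _ : Fin d => gaussianReal 0 v)).comp
      (fun _ (y : ℝ) => y ^ 2) (fun _ => measurable_id.pow_const 2)
    exact this
  have hmap : ∀ i, μ.map (fun x => x i) = gaussianReal 0 v := by
    intro i
    ext s hs
    rw [Measure.map_apply (measurable_pi_apply i) hs]
    exact pi_eval_preimage _ i s
  have mgf_coord : ∀ (t : ℝ) (i : Fin d),
      mgf (X i) μ t = ∫ y, Real.exp (t * y ^ 2) ∂(gaussianReal 0 v) := by
    intro t i
    rw [mgf, ← hmap i, integral_map (measurable_pi_apply i).aemeasurable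
      ((measurable_id.pow_const 2).const_mul t).exp.aestronglyMeasurable]
  have int_coord : ∀ {t : ℝ}, 2 * t * (v:ℝ) < 1 → ∀ i,
      Integrable (fun x => Real.exp (t * X i x)) μ := by
    intro t ht i
    have h := integrable_exp_mul_sq_gaussian hv ht
    rw [← hmap i] at h
    exact (integrable_map_measure
      ((measurable_id.pow_const 2).const_mul t).exp.aestronglyMeasurable
      (measurable_pi_apply i).aemeasurable).mp h
  set S : (Fin d → ℝ) → ℝ := ∑ i, X i with hSdef
  have hS : ∀ x, S x = ∑ i, x i ^ 2 := by
    intro x; rw [hSdef, Finset.sum_apply]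
  -- upper tail
  have hdv : 2 * ((d:ℝ) * (δ/4)) * (v:ℝ) = δ/2 := by
    rw [hvr]; field_simp; ring
  have hdvneg : 2 * (-((d:ℝ) * (δ/4))) * (v:ℝ) = -(δ/2) := by
    rw [hvr]; field_simp; ring
  have htv1 : 2 * ((d:ℝ) * (δ/4)) * (v:ℝ) < 1 := by rw [hdv]; linarith
  have htv2 : 2 * (-((d:ℝ) * (δ/4))) * (v:ℝ) < 1 := by rw [hdvneg]; linarith
  have h_int_sum_pos : Integrable (fun x => Real.exp ((d:ℝ) * (δ/4) * S x)) μ := by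
    rw [hSdef]
    exact hindep.integrable_exp_mul_sum hXmeas (fun i _ => int_coord htv1 i)
  have h_int_sum_neg : Integrable (fun x => Real.exp (-((d:ℝ) * (δ/4)) * S x)) μ := by
    rw [hSdef]
    exact hindep.integrable_exp_mul_sum hXmeas (fun i _ => int_coord htv2 i)
  have hmgf_pos : mgf S μ ((d:ℝ) * (δ/4)) = ((√(1 - δ/2))⁻¹) ^ d := by
    rw [hSdef, hindep.mgf_sum hXmeas]
    have : ∀ i : Fin d, mgf (X i) μ ((d:ℝ) * (δ/4)) = (√(1 - δ/2))⁻¹ := by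
      intro i
      rw [mgf_coord, integral_exp_mul_sq_gaussian hv htv1, hdv]
    simp_rw [this]
    simp
  have hmgf_neg : mgf S μ (-((d:ℝ) * (δ/4))) = ((√(1 + δ/2))⁻¹) ^ d := by
    rw [hSdef, hindep.mgf_sum hXmeas]
    have : ∀ i : Fin d, mgf (X i) μ (-((d:ℝ) * (δ/4))) = (√(1 + δ/2))⁻¹ := by
      intro i
      rw [mgf_coord, integral_exp_mul_sq_gaussian hv htv2, hdvneg]
      norm_num
    simp_rw [this]
    simp
  have chernoff_up : (μ {x | (1+δ)^2 ≤ S x}).toReal ≤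
      Real.exp (-((d:ℝ) * (δ/4)) * (1+δ)^2) * ((√(1 - δ/2))⁻¹) ^ d := by
    rw [← hmgf_pos]
    exact measure_ge_le_exp_mul_mgf ((1+δ)^2) (by positivity) h_int_sum_pos
  have chernoff_lo : (μ {x | S x ≤ (1-δ)^2}).toReal ≤
      Real.exp ((d:ℝ) * (δ/4) * (1-δ)^2) * ((√(1 + δ/2))⁻¹) ^ d := by
    rw [← hmgf_neg]
    have := measure_le_le_exp_mul_mgf (μ := μ) (X := S) ((1-δ)^2)
      (neg_nonpos.mpr (by positivity)) h_int_sum_neg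
    rwa [neg_neg] at this
  -- numeric bounds
  have tail_up : (μ {x | (1+δ)^2 ≤ S x}).toReal ≤ Real.exp (-δ^2 * d / 10) := by
    refine chernoff_up.trans ?_
    have hb := base_upper hδ0 hδ1
    have h1 : ((√(1 - δ/2))⁻¹) ^ d ≤ (Real.exp (δ/4 * (1+δ)^2 - δ^2/10)) ^ d :=
      pow_le_pow_left₀ (by positivity) hb d
    calc Real.exp (-((d:ℝ) * (δ/4)) * (1+δ)^2) * ((√(1 - δ/2))⁻¹) ^ d
        ≤ Real.exp (-((d:ℝ) * (δ/4)) * (1+δ)^2) *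
            (Real.exp (δ/4 * (1+δ)^2 - δ^2/10)) ^ d := by
          exact mul_le_mul_of_nonneg_left h1 (Real.exp_pos _).le
      _ = Real.exp (-δ^2 * d / 10) := by
          rw [← Real.exp_nat_mul, ← Real.exp_add]
          congr 1
          ring
  have tail_lo : (μ {x | S x ≤ (1-δ)^2}).toReal ≤ Real.exp (-δ^2 * d / 10) := by
    refine chernoff_lo.trans ?_
    have hb := base_lower hδ0 hδ1
    have h1 : ((√(1 + δ/2))⁻¹) ^ d ≤ (Real.exp (-(δ/4 * (1-δ)^2) - δ^2/10)) ^ d :=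
      pow_le_pow_left₀ (by positivity) hb d
    calc Real.exp ((d:ℝ) * (δ/4) * (1-δ)^2) * ((√(1 + δ/2))⁻¹) ^ d
        ≤ Real.exp ((d:ℝ) * (δ/4) * (1-δ)^2) *
            (Real.exp (-(δ/4 * (1-δ)^2) - δ^2/10)) ^ d := by
          exact mul_le_mul_of_nonneg_left h1 (Real.exp_pos _).le
      _ = Real.exp (-δ^2 * d / 10) := by
          rw [← Real.exp_nat_mul, ← Real.exp_add]
          congr 1
          ring
  -- event manipulation
  set E : Set (Fin d → ℝ) := {x | Real.sqrt (∑ i, x i ^ 2) ∈ Set.Ioo (1 - δ) (1 + δ)}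
    with hEdef
  have hSmeas : Measurable S := by
    have h0 : Measurable fun x : Fin d → ℝ => ∑ i, x i ^ 2 :=
      Finset.measurable_sum _ fun i _ => hXmeas i
    rw [show S = fun x => ∑ i, x i ^ 2 from funext hS]
    exact h0
  have hEmeas : MeasurableSet E := by
    have : E = (fun x => Real.sqrt (S x)) ⁻¹' (Set.Ioo (1 - δ) (1 + δ)) := by
      ext x; simp [hEdef, hS]
    rw [this]
    exact hSmeas.sqrt measurableSet_Ioo
  have hsub : Eᶜ ⊆ {x | S x ≤ (1-δ)^2} ∪ {x | (1+δ)^2 ≤ S x} := by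
    intro x hx
    have hSx0 : 0 ≤ S x := by rw [hS]; positivity
    simp only [hEdef, Set.mem_compl_iff, Set.mem_setOf_eq, Set.mem_Ioo, not_and_or,
      not_lt] at hx
    rcases hx with hx | hx
    · left
      have h1 : √(S x) ≤ 1 - δ := by rwa [hS]
      have h2 : 0 ≤ 1 - δ := (Real.sqrt_nonneg _).trans h1
      have := pow_le_pow_left₀ (Real.sqrt_nonneg _) h1 2
      rwa [Real.sq_sqrt hSx0] at this
    · right
      have h1 : 1 + δ ≤ √(S x) := by rw [hS]; exact hx
      have := pow_le_pow_left₀ (by linarith : (0:ℝ) ≤ 1 + δ) h1 2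
      rwa [Real.sq_sqrt hSx0] at this
  have hcompl_le : (μ Eᶜ).toReal ≤ 2 * Real.exp (-δ^2 * d / 10) := by
    have h1 : μ Eᶜ ≤ μ {x | S x ≤ (1-δ)^2} + μ {x | (1+δ)^2 ≤ S x} :=
      (measure_mono hsub).trans (measure_union_le _ _)
    have h2 : (μ Eᶜ).toReal ≤
        (μ {x | S x ≤ (1-δ)^2}).toReal + (μ {x | (1+δ)^2 ≤ S x}).toReal := by
      rw [← ENNReal.toReal_add (measure_ne_top _ _) (measure_ne_top _ _)]
      exact ENNReal.toReal_mono
        (ENNReal.add_ne_top.mpr ⟨measure_ne_top _ _, measure_ne_top _ _⟩) h1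
    linarith [tail_up, tail_lo]
  have hsum : (μ E).toReal + (μ Eᶜ).toReal = 1 := by
    rw [← ENNReal.toReal_add (measure_ne_top _ _) (measure_ne_top _ _),
      measure_add_measure_compl hEmeas, measure_univ, ENNReal.toReal_one]
  have : -δ^2 * (d:ℝ) / 10 = -δ^2 * d / 10 := rfl
  linarith [hcompl_le, hsum]
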